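/- For all natural numbers n and k with 0 ≤ k ≤ ⌊n/2⌋, the number of B-paths of length n having exactly k down-steps equals C(n,k) − C(n,k-1) (where C(n,-1) = 0). -/

import Mathlib

/-- A step of a lattice path: up-step (1,1), down-step (1,-1), or horizontal step (1,0). -/
inductive Step where
  | U : Step
  | D : Step
  | H : Step
deriving DecidableEq

instance : Fintype Step where
  elems := {Step.U, Step.D, Step.H}
  complete := fun x => by cases x <;> simp

/-- The change in the second coordinate produced by a step. -/
def stepVal : Step → ℤ
  | .U => 1
  | .D => -1
  | .H => 0

/-- The height (second coordinate) reached after performing the steps of `l`, starting at 0. -/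
def hgt (l : List Step) : ℤ := (l.map stepVal).sum

/-- `l` is a B-path: it returns to height 0, never goes below the x-axis, and all
horizontal steps occur at height 0. -/
def IsBPath (l : List Step) : Prop :=
  hgt l = 0 ∧ (∀ i : ℕ, 0 ≤ hgt (l.take i)) ∧
    ∀ i : ℕ, l[i]? = some Step.H → hgt (l.take i) = 0

def Good (l : List Step) (k : ℕ) (h : ℤ) : Prop :=
  (∀ i : ℕ, 0 ≤ hgt (l.take i)) ∧
  (∀ i : ℕ, l[i]? = some Step.H → hgt (l.take i) = 0) ∧
  l.count Step.D = k ∧ hgt l = h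

def paths : ℕ → Finset (List Step)
  | 0 => {[]}
  | n+1 => ((paths n).image (· ++ [Step.U])) ∪ ((paths n).image (· ++ [Step.D]))
      ∪ ((paths n).image (· ++ [Step.H]))

open Classical in
noncomputable def Bc (n k : ℕ) (h : ℤ) : ℕ :=
  ((paths n).filter (fun l => Good l k h)).card

lemma mem_paths {l : List Step} {n : ℕ} : l ∈ paths n ↔ l.length = n := by
  induction n generalizing l with
  | zero => simp [paths, List.length_eq_zero_iff]
  | succ n ih =>
    simp only [paths, Finset.mem_union, Finset.mem_image]
    constructor
    · rintro ((⟨a,ha,rfl⟩|⟨a,ha,rfl⟩)|⟨a,ha,rfl⟩) <;> simp [ih.mp ha]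
    · intro hl
      have hne : l ≠ [] := by intro h; simp [h] at hl
      have hd : l.dropLast ++ [l.getLast hne] = l := List.dropLast_append_getLast hne
      have hlen : l.dropLast.length = n := by
        have : l.dropLast.length = l.length - 1 := List.length_dropLast; omega
      cases hgl : l.getLast hne with
      | U => left; left; exact ⟨l.dropLast, ih.mpr hlen, by rw [← hgl, hd]⟩
      | D => left; right; exact ⟨l.dropLast, ih.mpr hlen, by rw [← hgl, hd]⟩
      | H => right; exact ⟨l.dropLast, ih.mpr hlen, by rw [← hgl, hd]⟩

lemma hgt_append (l m : List Step) : hgt (l ++ m) = hgt l + hgt m := by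
  simp [hgt]

lemma hgt_concat (l : List Step) (s : Step) : hgt (l ++ [s]) = hgt l + stepVal s := by
  simp [hgt]

lemma nonneg_concat {l : List Step} {s : Step} :
    (∀ i : ℕ, 0 ≤ hgt ((l ++ [s]).take i)) ↔
      (∀ i : ℕ, 0 ≤ hgt (l.take i)) ∧ 0 ≤ hgt l + stepVal s := by
  constructor
  · intro h
    refine ⟨fun i => ?_, ?_⟩
    · rcases le_or_gt i l.length with hi | hi
      · have := h i
        rwa [List.take_append_of_le_length hi] at this
      · have : l.take i = l := List.take_of_length_le (le_of_lt hi)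
        rw [this]
        have := h l.length
        rwa [List.take_append_of_le_length le_rfl, List.take_length] at this
    · have := h (l.length + 1)
      rwa [List.take_of_length_le (by simp), hgt_concat] at this
  · rintro ⟨h1, h2⟩ i
    rcases le_or_gt i l.length with hi | hi
    · rw [List.take_append_of_le_length hi]; exact h1 i
    · rw [List.take_of_length_le (by simp; omega), hgt_concat]; exact h2

lemma honly_concat {l : List Step} {s : Step} :
    (∀ i : ℕ, (l ++ [s])[i]? = some Step.H → hgt ((l ++ [s]).take i) = 0) ↔
      (∀ i : ℕ, l[i]? = some Step.H → hgt (l.take i) = 0) ∧ (s = Step.H → hgt l = 0) := by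
  constructor
  · intro h
    refine ⟨fun i hi => ?_, fun hs => ?_⟩
    · have hilen : i < l.length := by
        by_contra hc
        rw [List.getElem?_eq_none (le_of_not_gt hc)] at hi
        exact nomatch hi
      have := h i (by rw [List.getElem?_append, if_pos hilen]; exact hi)
      rwa [List.take_append_of_le_length (le_of_lt hilen)] at this
    · have := h l.length (by simp [hs, List.getElem?_append_right le_rfl])
      rwa [List.take_append_of_le_length le_rfl, List.take_length] at this
  · rintro ⟨h1, h2⟩ i hi
    rcases lt_or_ge i l.length with hil | hil
    · rw [List.getElem?_append, if_pos hil] at hi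
      rw [List.take_append_of_le_length (le_of_lt hil)]
      exact h1 i hi
    · rcases eq_or_lt_of_le hil with rfl | hil2
      · rw [List.take_append_of_le_length le_rfl, List.take_length]
        apply h2
        rw [List.getElem?_append_right le_rfl] at hi
        have := hi.symm; simp at this; simp [this]
      · rw [List.getElem?_eq_none (by simp; omega)] at hi
        exact nomatch hi

lemma count_concat_step (l : List Step) (s : Step) :
    (l ++ [s]).count Step.D = l.count Step.D + (if s = Step.D then 1 else 0) := by
  cases s <;> simp [List.count_append, List.count_singleton']

lemma good_concat_U {l : List Step} {k : ℕ} {h : ℤ} :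
    Good (l ++ [Step.U]) k h ↔ Good l k (h-1) ∧ 0 ≤ h := by
  unfold Good
  rw [nonneg_concat, honly_concat, count_concat_step, hgt_concat]
  simp only [stepVal, reduceCtorEq, reduceIte, if_false, if_true]
  constructor
  · rintro ⟨⟨h1, h2⟩, ⟨h3, -⟩, h4, h5⟩
    exact ⟨⟨h1, h3, by omega, by omega⟩, by omega⟩
  · rintro ⟨⟨h1, h3, h4, h5⟩, h6⟩
    exact ⟨⟨h1, by omega⟩, ⟨h3, by simp⟩, by omega, by omega⟩

lemma good_concat_D {l : List Step} {k : ℕ} {h : ℤ} :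
    Good (l ++ [Step.D]) k h ↔ k ≠ 0 ∧ Good l (k-1) (h+1) ∧ 0 ≤ h := by
  unfold Good
  rw [nonneg_concat, honly_concat, count_concat_step, hgt_concat]
  simp only [stepVal, reduceCtorEq, reduceIte, if_false, if_true]
  constructor
  · rintro ⟨⟨h1, h2⟩, ⟨h3, -⟩, h4, h5⟩
    exact ⟨by omega, ⟨h1, h3, by omega, by omega⟩, by omega⟩
  · rintro ⟨hk, ⟨h1, h3, h4, h5⟩, h6⟩
    exact ⟨⟨h1, by omega⟩, ⟨h3, by simp⟩, by omega, by omega⟩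

lemma good_concat_H {l : List Step} {k : ℕ} {h : ℤ} :
    Good (l ++ [Step.H]) k h ↔ Good l k 0 ∧ h = 0 := by
  unfold Good
  rw [nonneg_concat, honly_concat, count_concat_step, hgt_concat]
  simp only [stepVal, reduceCtorEq, reduceIte, if_false, if_true]
  constructor
  · rintro ⟨⟨h1, h2⟩, ⟨h3, hH⟩, h4, h5⟩
    have h0 : hgt l = 0 := hH trivial
    exact ⟨⟨h1, h3, by omega, h0⟩, by omega⟩
  · rintro ⟨⟨h1, h3, h4, h5⟩, rfl⟩
    exact ⟨⟨h1, by omega⟩, ⟨h3, fun _ => h5⟩, by omega, by omega⟩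

lemma hgt_le_length (l : List Step) : hgt l + 2 * (l.count Step.D : ℤ) ≤ l.length := by
  induction l with
  | nil => simp [hgt]
  | cons s t ih =>
    cases s <;> simp [hgt, stepVal, List.count_cons] at ih ⊢ <;> push_cast <;> omega

open Classical in
lemma Bc_neg {n k : ℕ} {h : ℤ} (hh : h < 0) : Bc n k h = 0 := by
  rw [Bc, Finset.card_eq_zero, Finset.filter_eq_empty_iff]
  rintro l - ⟨h1, -, -, h4⟩
  have := h1 l.length
  rw [List.take_length] at this
  omega

open Classical in
lemma Bc_big {n k : ℕ} {h : ℤ} (hh : (n : ℤ) < h + 2 * k) : Bc n k h = 0 := by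
  rw [Bc, Finset.card_eq_zero, Finset.filter_eq_empty_iff]
  rintro l hl ⟨-, -, h3, h4⟩
  have := hgt_le_length l
  rw [h3, h4, mem_paths.mp hl] at this
  omega

open Classical in
lemma card_filter_image (s : Step) (n : ℕ) (P : List Step → Prop) :
    (((paths n).image (· ++ [s])).filter P).card
      = ((paths n).filter (fun l => P (l ++ [s]))).card := by
  rw [Finset.filter_image]
  exact Finset.card_image_of_injective _ (List.append_left_injective [s])

lemma disj_image (s t : Step) (hst : s ≠ t) (n m : ℕ) :
    Disjoint ((paths n).image (· ++ [s])) ((paths m).image (· ++ [t])) := by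
  rw [Finset.disjoint_left]
  rintro x hx hy
  simp only [Finset.mem_image] at hx hy
  obtain ⟨a, -, ha⟩ := hx
  obtain ⟨b, -, hb⟩ := hy
  have : a ++ [s] = b ++ [t] := ha.trans hb.symm
  have := (List.append_inj' this rfl).2
  simp at this
  exact hst this

open Classical in
lemma Bc_succ (n k : ℕ) (h : ℤ) (h0 : 0 ≤ h) :
    Bc (n+1) k h = Bc n k (h-1) + (if k = 0 then 0 else Bc n (k-1) (h+1))
      + (if h = 0 then Bc n k 0 else 0) := by
  have hdisj1 : Disjoint (((paths n).image (· ++ [Step.U])) ∪ ((paths n).image (· ++ [Step.D])))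
      ((paths n).image (· ++ [Step.H])) := by
    rw [Finset.disjoint_union_left]
    exact ⟨disj_image _ _ (by simp) n n, disj_image _ _ (by simp) n n⟩
  have hdisj2 : Disjoint ((paths n).image (· ++ [Step.U])) ((paths n).image (· ++ [Step.D])) :=
    disj_image _ _ (by simp) n n
  rw [Bc]
  show ((((paths n).image (· ++ [Step.U])) ∪ ((paths n).image (· ++ [Step.D]))
      ∪ ((paths n).image (· ++ [Step.H]))).filter (fun l => Good l k h)).card = _
  rw [Finset.filter_union,
    Finset.card_union_of_disjoint (Finset.disjoint_filter_filter hdisj1),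
    Finset.filter_union,
    Finset.card_union_of_disjoint (Finset.disjoint_filter_filter hdisj2),
    card_filter_image, card_filter_image, card_filter_image]
  congr 1
  · congr 1
    · -- U term
      rw [Bc]
      apply Finset.card_nbij' id id <;> intro a ha <;> simp only [Finset.mem_coe, Finset.mem_filter, id] at *
      · exact ⟨ha.1, (good_concat_U.mp ha.2).1⟩
      · exact ⟨ha.1, good_concat_U.mpr ⟨ha.2, h0⟩⟩
    · -- D term
      split
      · next hk =>
        subst hk
        rw [Finset.card_eq_zero, Finset.filter_eq_empty_iff]
        intro l _ hg
        exact (good_concat_D.mp hg).1 rfl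
      · next hk =>
        rw [Bc]
        apply Finset.card_nbij' id id <;> intro a ha <;> simp only [Finset.mem_coe, Finset.mem_filter, id] at *
        · exact ⟨ha.1, (good_concat_D.mp ha.2).2.1⟩
        · exact ⟨ha.1, good_concat_D.mpr ⟨hk, ha.2, h0⟩⟩
  · -- H term
    split
    · next hh =>
      subst hh
      rw [Bc]
      apply Finset.card_nbij' id id <;> intro a ha <;> simp only [Finset.mem_coe, Finset.mem_filter, id] at *
      · exact ⟨ha.1, (good_concat_H.mp ha.2).1⟩
      · exact ⟨ha.1, good_concat_H.mpr ⟨ha.2, rfl⟩⟩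
    · next hh =>
      rw [Finset.card_eq_zero, Finset.filter_eq_empty_iff]
      intro l _ hg
      exact hh (good_concat_H.mp hg).2

open Classical in
lemma Bc_zero (k : ℕ) (h : ℤ) : Bc 0 k h = if k = 0 ∧ h = 0 then 1 else 0 := by
  rw [Bc]
  show (Finset.filter _ ({[]} : Finset (List Step))).card = _
  rw [Finset.filter_singleton]
  have hgood : Good ([] : List Step) k h ↔ (k = 0 ∧ h = 0) := by
    unfold Good
    simp [hgt]
    tauto
  split
  · next hg => rw [if_pos (hgood.mp hg)]; simp
  · next hg => rw [if_neg (fun c => hg (hgood.mpr c))]; simp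

lemma choose_cast_succ (n i : ℕ) : (((n+1).choose (i+1) : ℤ)) = n.choose i + n.choose (i+1) := by
  exact_mod_cast Nat.choose_succ_succ n i

lemma Bc_eq (n : ℕ) : ∀ (k : ℕ) (h : ℤ), 0 ≤ h → h + 2 * (k : ℤ) ≤ (n : ℤ) →
    (Bc n k h : ℤ) = (n.choose k : ℤ) - (if k = 0 then 0 else (n.choose (k-1) : ℤ)) := by
  induction n with
  | zero =>
    intro k h h0 hle
    have hk : k = 0 := by omega
    have hh : h = 0 := by omega
    subst hk; subst hh
    rw [Bc_zero]
    simp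
  | succ n ih =>
    intro k h h0 hle
    rw [Bc_succ n k h h0]
    push_cast at hle ⊢
    rcases Nat.eq_zero_or_pos k with rfl | hkpos
    · -- k = 0
      simp only [if_pos rfl, Nat.choose_zero_right]
      by_cases hh : h = 0
      · subst hh
        rw [Bc_neg (n := n) (k := 0) (h := (0:ℤ)-1) (by norm_num),
          ih 0 0 le_rfl (by push_cast; omega)]
        simp
      · rw [ih 0 (h-1) (by omega) (by push_cast; omega), if_neg hh]
        simp
    · -- k ≥ 1
      obtain ⟨j, rfl⟩ : ∃ j, k = j + 1 := ⟨k - 1, by omega⟩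
      simp only [if_neg (by omega : ¬ (j + 1 = 0)), Nat.add_sub_cancel]
      have hT2 : (Bc n j (h+1) : ℤ)
          = (n.choose j : ℤ) - (if j = 0 then 0 else (n.choose (j-1) : ℤ)) :=
        ih j (h+1) (by omega) (by push_cast; omega)
      by_cases hh : h = 0
      · subst hh
        rw [Bc_neg (n := n) (k := j+1) (h := (0:ℤ)-1) (by norm_num), hT2,
          if_pos rfl]
        by_cases h2k : 2 * (j+1) ≤ n
        · rw [ih (j+1) 0 le_rfl (by push_cast; omega),
            if_neg (by omega : ¬ (j + 1 = 0)), Nat.add_sub_cancel]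
          have hp := choose_cast_succ n j
          rcases Nat.eq_zero_or_pos j with rfl | hj
          · simp only [if_pos rfl, Nat.choose_zero_right, Nat.choose_one_right] at *
            push_cast at *
            omega
          · obtain ⟨i, rfl⟩ : ∃ i, j = i + 1 := ⟨j - 1, by omega⟩
            have hp2 := choose_cast_succ n i
            simp only [if_neg (by omega : ¬ (i+1 = 0)), Nat.add_sub_cancel] at *
            omega
        · -- 2(j+1) = n+1
          have hn : n = 2 * j + 1 := by omega
          rw [Bc_big (n := n) (k := j+1) (h := 0) (by push_cast; omega)]
          have hsym : (n.choose (j+1) : ℤ) = n.choose j := by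
            have := Nat.choose_symm (n := n) (k := j+1) (by omega)
            rw [show n - (j+1) = j by omega] at this
            exact_mod_cast this.symm
          have hp := choose_cast_succ n j
          rcases Nat.eq_zero_or_pos j with rfl | hj
          · simp only [if_pos rfl, Nat.choose_zero_right, Nat.choose_one_right] at *
            push_cast at *
            omega
          · obtain ⟨i, rfl⟩ : ∃ i, j = i + 1 := ⟨j - 1, by omega⟩
            have hp2 := choose_cast_succ n i
            simp only [if_neg (by omega : ¬ (i+1 = 0)), Nat.add_sub_cancel] at *
            omega
      · -- h ≥ 1
        rw [if_neg hh, ih (j+1) (h-1) (by omega) (by push_cast; omega), hT2,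
          if_neg (by omega : ¬ (j + 1 = 0)), Nat.add_sub_cancel]
        have hp := choose_cast_succ n j
        rcases Nat.eq_zero_or_pos j with rfl | hj
        · simp only [if_pos rfl, Nat.choose_zero_right, Nat.choose_one_right] at *
          push_cast at *
          omega
        · obtain ⟨i, rfl⟩ : ∃ i, j = i + 1 := ⟨j - 1, by omega⟩
          have hp2 := choose_cast_succ n i
          simp only [if_neg (by omega : ¬ (i+1 = 0)), Nat.add_sub_cancel] at *
          omega


/-- For `0 ≤ k ≤ ⌊n/2⌋`, the number of B-paths of length `n` with exactly `k` down-steps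
is `C(n,k) - C(n,k-1)`, where `C(n,-1) = 0`. -/
theorem stmt1 (n k : ℕ) (hk : k ≤ n / 2) :
    (Nat.card {l : List Step //
        l.length = n ∧ IsBPath l ∧ l.count Step.D = k} : ℤ)
      = (n.choose k : ℤ) - (if k = 0 then 0 else (n.choose (k - 1) : ℤ)) := by
  classical
  have hcard : Nat.card {l : List Step //
      l.length = n ∧ IsBPath l ∧ l.count Step.D = k} = Bc n k 0 := by
    rw [Bc, ← Nat.card_eq_finsetCard]
    apply Nat.card_congr
    apply Equiv.subtypeEquivRight
    intro l
    rw [Finset.mem_filter, mem_paths]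
    unfold IsBPath Good
    tauto
  rw [hcard]
  exact Bc_eq n k 0 le_rfl (by push_cast; omega)
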